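/- Let X be a subshift over a finite alphabet Λ. The collection of all sets of the form V_{α; β₁,…,β_n; γ₁,…,γ_m} = {η ∈ Ω_X : α ∈ η; αβ_i⁻¹ ∈ η for i = 1,…,n; αγ_j⁻¹ ∉ η for j = 1,…,m}, where α, β₁,…,β_n, γ₁,…,γ_m range over 𝔽₊, is a basis for the topology of Ω_X. -/

import Mathlib

open scoped Classical

namespace SubshiftPaper

variable {Λ : Type}

/-- The left shift on infinite words. -/
def shiftMap (x : ℕ → Λ) : ℕ → Λ := fun n => x (n + 1)

/-- Concatenation of a finite word with an infinite word. -/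
def cat (α : List Λ) (y : ℕ → Λ) : ℕ → Λ := fun n => α.getD n (y (n - α.length))

/-- `α` is a prefix of the infinite word `x`. -/
def Pref (α : List Λ) (x : ℕ → Λ) : Prop := ∀ (i : ℕ) (h : i < α.length), x i = α[i]

/-- The tail of `x` after `n` letters. -/
def tail (x : ℕ → Λ) (n : ℕ) : ℕ → Λ := fun i => x (n + i)

/-- `α` occurs in `x` at position `n`. -/
def OccursAt (α : List Λ) (x : ℕ → Λ) (n : ℕ) : Prop :=
  ∀ (i : ℕ) (h : i < α.length), x (n + i) = α[i]

/-- `α` occurs in `x` (as a contiguous block of letters). -/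
def Occurs (α : List Λ) (x : ℕ → Λ) : Prop := ∃ n, OccursAt α x n

/-- `X` is a subshift: a nonempty closed shift-invariant subset. -/
def IsSubshift [TopologicalSpace Λ] (X : Set (ℕ → Λ)) : Prop :=
  X.Nonempty ∧ IsClosed X ∧ ∀ x ∈ X, shiftMap x ∈ X

/-- The set of infinite words avoiding all words in `F`. -/
def ForbidSpace (F : Set (List Λ)) : Set (ℕ → Λ) := {x | ∀ α ∈ F, ¬ Occurs α x}

/-- `X` is a subshift of finite type. -/
def IsSFT (X : Set (ℕ → Λ)) : Prop := ∃ F : Set (List Λ), F.Finite ∧ X = ForbidSpace F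

/-- The follower set of a finite word. -/
def follower (X : Set (ℕ → Λ)) (α : List Λ) : Set (ℕ → Λ) := {y | y ∈ X ∧ cat α y ∈ X}

/-- The cylinder of a finite word. -/
def cylinder (X : Set (ℕ → Λ)) (α : List Λ) : Set (ℕ → Λ) := {x | x ∈ X ∧ Pref α x}

/-- The language of `X`. -/
def Language (X : Set (ℕ → Λ)) : Set (List Λ) := {α | ∃ x ∈ X, Occurs α x}

/-- The embedding of finite words into the free group. -/
def wd (α : List Λ) : FreeGroup Λ := (α.map FreeGroup.of).prod

/-- Indicator function of a set of group elements. -/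
noncomputable def chi (s : Set (FreeGroup Λ)) : FreeGroup Λ → Bool :=
  fun g => if g ∈ s then true else false

/-- The set `ξ_x ⊆ 𝔽`. -/
def xiSet [DecidableEq Λ] (X : Set (ℕ → Λ)) (x : ℕ → Λ) : Set (FreeGroup Λ) :=
  {g | ∃ α β : List Λ, g = wd α * (wd β)⁻¹ ∧
        FreeGroup.norm g = α.length + β.length ∧
        Pref α x ∧ tail x α.length ∈ follower X α ∩ follower X β}

/-- `ξ_x` as an element of `2^𝔽`. -/
noncomputable def xiB [DecidableEq Λ] (X : Set (ℕ → Λ)) (x : ℕ → Λ) : FreeGroup Λ → Bool :=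
  chi (xiSet X x)

/-- The spectrum `Ω_X`: the closure of `{ξ_x : x ∈ X}` in `2^𝔽`. -/
noncomputable def Omega [DecidableEq Λ] (X : Set (ℕ → Λ)) : Set (FreeGroup Λ → Bool) :=
  closure ((fun x => xiB X x) '' X)

/-- Left translation of an element of `2^𝔽`. -/
def translate (g : FreeGroup Λ) (ξ : FreeGroup Λ → Bool) : FreeGroup Λ → Bool :=
  fun h => ξ (g⁻¹ * h)

/-- `x` is the stem of `ξ`: `ξ ∩ 𝔽₊` is exactly the set of prefixes of `x`. -/
def IsStem (ξ : FreeGroup Λ → Bool) (x : ℕ → Λ) : Prop :=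
  {g | ξ g = true} ∩ {g | ∃ α : List Λ, g = wd α} =
    {g | ∃ α : List Λ, g = wd α ∧ Pref α x}

/-- `x` is the stem of `ξ` at `g`: `ξ ∩ g𝔽₊ = {gα : α is a prefix of x}`. -/
def IsStemAt (ξ : FreeGroup Λ → Bool) (g : FreeGroup Λ) (x : ℕ → Λ) : Prop :=
  {h | ξ h = true} ∩ {h | ∃ α : List Λ, h = g * wd α} =
    {h | ∃ α : List Λ, h = g * wd α ∧ Pref α x}

/-- The orbit of `ξ` under the spectral partial action. -/
def Orbit (ξ : FreeGroup Λ → Bool) : Set (FreeGroup Λ → Bool) :=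
  {η | ∃ g : FreeGroup Λ, ξ g⁻¹ = true ∧ η = translate g ξ}

/-- Topological freeness of the spectral partial action. -/
noncomputable def TopFree [DecidableEq Λ] (X : Set (ℕ → Λ)) : Prop :=
  ∀ g : FreeGroup Λ, g ≠ 1 →
    ∀ U : Set (FreeGroup Λ → Bool), IsOpen U →
      (U ∩ Omega X ⊆ {ξ | ξ g⁻¹ = true ∧ translate g ξ = ξ}) → U ∩ Omega X = ∅

/-- The periodic infinite word `γ^∞`. -/
noncomputable def perInf [Nonempty Λ] (γ : List Λ) : ℕ → Λ :=
  fun n => γ.getD (n % γ.length) (Classical.arbitrary Λ)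

/-- `n`-fold concatenation of a finite word with itself. -/
def rep : ℕ → List Λ → List Λ
  | 0, _ => []
  | n + 1, γ => γ ++ rep n γ

/-- `γ` is a circuit relative to `X`. -/
noncomputable def IsCircuit [Nonempty Λ] (X : Set (ℕ → Λ)) (γ : List Λ) : Prop :=
  γ ≠ [] ∧ perInf γ ∈ X

/-- `y` is an exit for the circuit `γ`. -/
noncomputable def IsExit [Nonempty Λ] (X : Set (ℕ → Λ)) (γ : List Λ) (y : ℕ → Λ) : Prop :=
  y ≠ perInf γ ∧ cat γ y ∈ X

/-- `z` is a strong exit for the circuit `γ`. -/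
noncomputable def IsStrongExit [Nonempty Λ] (X : Set (ℕ → Λ)) (γ : List Λ) (z : ℕ → Λ) : Prop :=
  z ≠ perInf γ ∧ ∀ n : ℕ, cat (rep n γ) z ∈ X

/-- The sets `X_g` of the standard partial action. -/
def Xg [DecidableEq Λ] (X : Set (ℕ → Λ)) (g : FreeGroup Λ) : Set (ℕ → Λ) :=
  {x | ∃ α β : List Λ, g = wd α * (wd β)⁻¹ ∧
        FreeGroup.norm g = α.length + β.length ∧
        ∃ y ∈ follower X α ∩ follower X β, x = cat α y}

/-- `x` is a fixed point for `θ_g`. -/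
def IsThetaFixed [DecidableEq Λ] (X : Set (ℕ → Λ)) (g : FreeGroup Λ) (x : ℕ → Λ) : Prop :=
  ∃ α β : List Λ, g = wd α * (wd β)⁻¹ ∧
    FreeGroup.norm g = α.length + β.length ∧
    ∃ y ∈ follower X α ∩ follower X β, x = cat β y ∧ cat α y = x

/-- `x` may be collectively reached from the finite set `B`. -/
def CollReached (X : Set (ℕ → Λ)) (B : Finset (List Λ)) (x : ℕ → Λ) : Prop :=
  ∃ α γ : List Λ, Pref α x ∧ ∀ β ∈ B, cat (β ++ γ) (tail x α.length) ∈ X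

/-- `X` is collectively cofinal. -/
def CollCofinal (X : Set (ℕ → Λ)) : Prop :=
  ∀ B : Finset (List Λ), ↑B ⊆ Language X → (⋂ β ∈ B, follower X β).Nonempty →
    ∀ x ∈ X, CollReached X B x

/-- `X` is strongly cofinal. -/
def StrongCofinal (X : Set (ℕ → Λ)) : Prop :=
  ∀ β ∈ Language X, ∃ M : ℕ, ∀ x ∈ X, ∃ α γ : List Λ, Pref α x ∧
    cat (β ++ γ) (tail x α.length) ∈ X ∧ α.length + γ.length ≤ M

/-- The even shift. -/
def evenShift : Set (ℕ → Fin 2) :=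
  ForbidSpace {w | ∃ n : ℕ, w = 0 :: (List.replicate (2 * n + 1) 1 ++ [0])}


/-! ### Auxiliary material for Statement 13 -/

section Aux13

/-- The word (in the free group letters-with-signs alphabet) of a positive word. -/
def posW (α : List Λ) : List (Λ × Bool) := α.map (fun a => (a, true))

/-- The word of the inverse of a positive word. -/
def negW (β : List Λ) : List (Λ × Bool) := (β.map (fun a => (a, false))).reverse

lemma posW_nil : posW ([] : List Λ) = [] := rfl

lemma negW_nil : negW ([] : List Λ) = [] := rfl

lemma posW_cons (a : Λ) (α : List Λ) : posW (a :: α) = (a, true) :: posW α := rfl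

lemma mem_posW_snd {α : List Λ} {p : Λ × Bool} (h : p ∈ posW α) : p.2 = true := by
  simp only [posW, List.mem_map] at h
  obtain ⟨a, -, rfl⟩ := h
  rfl

lemma mem_negW_snd {β : List Λ} {p : Λ × Bool} (h : p ∈ negW β) : p.2 = false := by
  simp only [negW, List.mem_reverse, List.mem_map] at h
  obtain ⟨a, -, rfl⟩ := h
  rfl

lemma negW_injective : Function.Injective (negW (Λ := Λ)) := by
  intro β β' h
  have h' := congrArg List.reverse h
  simp only [negW, List.reverse_reverse] at h'
  exact List.map_injective_iff.2 (fun a b hab => congrArg Prod.fst hab) h'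

lemma wd_nil : wd ([] : List Λ) = 1 := rfl

lemma wd_eq_mk (α : List Λ) : wd α = FreeGroup.mk (posW α) := by
  induction α with
  | nil => simpa [wd, posW] using FreeGroup.one_eq_mk
  | cons a α ih =>
    have : wd (a :: α) = FreeGroup.of a * wd α := by
      simp [wd]
    rw [this, ih, posW_cons, FreeGroup.of, FreeGroup.mul_mk]
    rfl

lemma wd_append (α β : List Λ) : wd (α ++ β) = wd α * wd β := by
  simp [wd]

lemma invRev_posW (β : List Λ) : FreeGroup.invRev (posW β) = negW β := by
  simp [FreeGroup.invRev, posW, negW, List.map_map, Function.comp_def]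

lemma decomp_eq_mk (α β : List Λ) :
    wd α * (wd β)⁻¹ = FreeGroup.mk (posW α ++ negW β) := by
  rw [wd_eq_mk, wd_eq_mk, FreeGroup.inv_mk, FreeGroup.mul_mk, invRev_posW]

lemma step_all_true {L L' : List (Λ × Bool)} (h : FreeGroup.Red.Step L L')
    (hall : ∀ p ∈ L, p.2 = true) : False := by
  cases h with
  | @not L₁ L₂ x b =>
    have h1 := hall (x, b) (by simp)
    have h2 := hall (x, !b) (by simp)
    simp only at h1 h2
    rw [h1] at h2
    simp at h2

lemma reduce_posW [DecidableEq Λ] (α : List Λ) : FreeGroup.reduce (posW α) = posW α := by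
  rcases (FreeGroup.reduce.red (L := posW α)).cases_head with h | ⟨c, hstep, -⟩
  · exact h.symm
  · exact absurd hstep (fun hs => step_all_true hs (fun p hp => mem_posW_snd hp))

lemma toWord_wd [DecidableEq Λ] (α : List Λ) : (wd α).toWord = posW α := by
  rw [wd_eq_mk, FreeGroup.toWord_mk, reduce_posW]

lemma norm_wd [DecidableEq Λ] (α : List Λ) : FreeGroup.norm (wd α) = α.length := by
  simp [FreeGroup.norm, toWord_wd, posW]

lemma toWord_decomp [DecidableEq Λ] {α β : List Λ}
    (hn : FreeGroup.norm (wd α * (wd β)⁻¹) = α.length + β.length) :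
    (wd α * (wd β)⁻¹).toWord = posW α ++ negW β := by
  rw [decomp_eq_mk] at hn ⊢
  rw [FreeGroup.toWord_mk]
  have hsub : List.Sublist (FreeGroup.reduce (posW α ++ negW β)) (posW α ++ negW β) :=
    (FreeGroup.reduce.red).sublist
  apply hsub.eq_of_length
  have hlen : (posW α ++ negW β).length = α.length + β.length := by
    simp [posW, negW]
  have : (FreeGroup.mk (posW α ++ negW β)).toWord.length = α.length + β.length := hn
  rw [FreeGroup.toWord_mk] at this
  omega

lemma decomp_unique : ∀ (α α' β β' : List Λ),
    posW α ++ negW β = posW α' ++ negW β' → α = α' ∧ β = β' := by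
  intro α
  induction α with
  | nil =>
    intro α' β β' h
    cases α' with
    | nil =>
      simp only [posW_nil, List.nil_append] at h
      exact ⟨rfl, negW_injective h⟩
    | cons a' t' =>
      exfalso
      simp only [posW_nil, List.nil_append, posW_cons, List.cons_append] at h
      have : ((a', true) : Λ × Bool) ∈ negW β := by rw [h]; exact List.mem_cons_self
      simpa using mem_negW_snd this
  | cons a t ih =>
    intro α' β β' h
    cases α' with
    | nil =>
      exfalso
      simp only [posW_nil, List.nil_append, posW_cons, List.cons_append] at h
      have : ((a, true) : Λ × Bool) ∈ negW β' := by rw [← h]; exact List.mem_cons_self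
      simpa using mem_negW_snd this
    | cons a' t' =>
      simp only [posW_cons, List.cons_append, List.cons.injEq, Prod.mk.injEq] at h
      obtain ⟨⟨haa, -⟩, htail⟩ := h
      obtain ⟨h1, h2⟩ := ih t' β β' htail
      exact ⟨by rw [haa, h1], h2⟩

lemma decomp_unique' [DecidableEq Λ] {g : FreeGroup Λ} {α β α' β' : List Λ}
    (hg : g = wd α * (wd β)⁻¹) (hn : FreeGroup.norm g = α.length + β.length)
    (hg' : g = wd α' * (wd β')⁻¹) (hn' : FreeGroup.norm g = α'.length + β'.length) :
    α = α' ∧ β = β' := by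
  have h1 : g.toWord = posW α ++ negW β := by
    rw [hg]; exact toWord_decomp (hg ▸ hn)
  have h2 : g.toWord = posW α' ++ negW β' := by
    rw [hg']; exact toWord_decomp (hg' ▸ hn')
  exact decomp_unique _ _ _ _ (h1.symm.trans h2)

/-! ### Elementary facts about tails, prefixes and concatenation -/

lemma tail_zero (x : ℕ → Λ) : tail x 0 = x := funext fun i => by simp [tail]

lemma tail_succ (x : ℕ → Λ) (n : ℕ) : tail x (n + 1) = shiftMap (tail x n) := by
  funext i
  show x (n + 1 + i) = x (n + (i + 1))
  exact congrArg x (by omega)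

lemma tail_mem [TopologicalSpace Λ] {X : Set (ℕ → Λ)} (hX : IsSubshift X) {x : ℕ → Λ}
    (hx : x ∈ X) (n : ℕ) : tail x n ∈ X := by
  induction n with
  | zero => rw [tail_zero]; exact hx
  | succ n ih => rw [tail_succ]; exact hX.2.2 _ ih

lemma cat_nil (y : ℕ → Λ) : cat [] y = y := funext fun n => by simp [cat]

lemma cat_pref {α : List Λ} {x : ℕ → Λ} (h : Pref α x) : cat α (tail x α.length) = x := by
  funext n
  show α.getD n (tail x α.length (n - α.length)) = x n
  by_cases hn : n < α.length
  · rw [List.getD_eq_getElem _ _ hn]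
    exact (h n hn).symm
  · rw [List.getD_eq_default _ _ (by omega)]
    show x (α.length + (n - α.length)) = x n
    exact congrArg x (by omega)

lemma pref_prefix {α α' : List Λ} {x : ℕ → Λ} (h : Pref α x) (h' : Pref α' x)
    (hle : α.length ≤ α'.length) : α <+: α' := by
  have hα : α = α'.take α.length := by
    apply List.ext_getElem
    · simp [hle]
    · intro i h1 h2
      rw [List.getElem_take]
      rw [← h i h1, ← h' i (by omega)]
  rw [hα]
  exact List.take_prefix _ _

lemma pref_ofFn (x : ℕ → Λ) (k : ℕ) : Pref (List.ofFn fun i : Fin k => x i) x := by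
  intro i h
  simp only [List.getElem_ofFn]

/-! ### Facts about `ξ_x` -/

lemma xiB_eq_true_iff [DecidableEq Λ] {X : Set (ℕ → Λ)} {x : ℕ → Λ} {g : FreeGroup Λ} :
    xiB X x g = true ↔ g ∈ xiSet X x := by
  simp [xiB, chi]

lemma xiB_wd_true [TopologicalSpace Λ] [DecidableEq Λ] {X : Set (ℕ → Λ)} (hX : IsSubshift X)
    {x : ℕ → Λ} (hx : x ∈ X) (α : List Λ) :
    xiB X x (wd α) = true ↔ Pref α x := by
  rw [xiB_eq_true_iff]
  constructor
  · rintro ⟨α', β', hg, hn, hp, -⟩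
    have h1 : (wd α).toWord = posW α := toWord_wd α
    have h2 : (wd α).toWord = posW α' ++ negW β' := by
      rw [hg]; exact toWord_decomp (hg ▸ hn)
    have h3 : posW α ++ negW [] = posW α' ++ negW β' := by
      rw [negW_nil, List.append_nil, ← h1, h2]
    obtain ⟨hαα, -⟩ := decomp_unique _ _ _ _ h3
    rwa [hαα]
  · intro hp
    refine ⟨α, [], by simp [wd_nil], by simp [norm_wd], hp, ?_, ?_⟩
    · exact ⟨tail_mem hX hx _, by rw [cat_pref hp]; exact hx⟩
    · exact ⟨tail_mem hX hx _, by rw [cat_nil]; exact tail_mem hX hx _⟩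

lemma xiB_decomp [DecidableEq Λ] {X : Set (ℕ → Λ)} {x : ℕ → Λ} {g : FreeGroup Λ}
    (h : xiB X x g = true) :
    ∃ α β : List Λ, g = wd α * (wd β)⁻¹ ∧ FreeGroup.norm g = α.length + β.length := by
  rw [xiB_eq_true_iff] at h
  obtain ⟨α, β, h1, h2, -⟩ := h
  exact ⟨α, β, h1, h2⟩

lemma xiB_apex [TopologicalSpace Λ] [DecidableEq Λ] {X : Set (ℕ → Λ)} (hX : IsSubshift X)
    {x : ℕ → Λ} (hx : x ∈ X) {g : FreeGroup Λ} {α β : List Λ}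
    (hg : g = wd α * (wd β)⁻¹) (hn : FreeGroup.norm g = α.length + β.length)
    (h : xiB X x g = true) : xiB X x (wd α) = true := by
  rw [xiB_eq_true_iff] at h
  obtain ⟨α', β', hg', hn', hp', -⟩ := h
  obtain ⟨hαα, -⟩ := decomp_unique' hg hn hg' hn'
  rw [xiB_wd_true hX hx]
  rw [hαα]
  exact hp'

/-! ### Facts about `Ω_X` -/

lemma isClosed_eval (g : FreeGroup Λ) (b : Bool) :
    IsClosed {ζ : FreeGroup Λ → Bool | ζ g = b} := by
  have h : {ζ : FreeGroup Λ → Bool | ζ g = b} = (fun ζ : FreeGroup Λ → Bool => ζ g) ⁻¹' {b} :=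
    rfl
  rw [h]
  exact (isClosed_discrete _).preimage (continuous_apply g)

lemma isOpen_eval (g : FreeGroup Λ) (b : Bool) :
    IsOpen {ζ : FreeGroup Λ → Bool | ζ g = b} := by
  have h : {ζ : FreeGroup Λ → Bool | ζ g = b} = (fun ζ : FreeGroup Λ → Bool => ζ g) ⁻¹' {b} :=
    rfl
  rw [h]
  exact (isOpen_discrete _).preimage (continuous_apply g)

lemma omega_forall [DecidableEq Λ] {X : Set (ℕ → Λ)} (P : (FreeGroup Λ → Bool) → Prop)
    (hP : IsClosed {ζ | P ζ}) (hx : ∀ x ∈ X, P (xiB X x)) :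
    ∀ ζ ∈ Omega X, P ζ := by
  intro ζ hζ
  exact closure_minimal (by rintro - ⟨x, hx', rfl⟩; exact hx x hx') hP hζ

lemma omega_true_decomp [TopologicalSpace Λ] [DecidableEq Λ] {X : Set (ℕ → Λ)}
    (hX : IsSubshift X) {ζ : FreeGroup Λ → Bool} (hζ : ζ ∈ Omega X) {g : FreeGroup Λ}
    (hg : ζ g = true) :
    ∃ α β : List Λ, g = wd α * (wd β)⁻¹ ∧ FreeGroup.norm g = α.length + β.length ∧
      ζ (wd α) = true := by
  by_cases hd : ∃ α β : List Λ, g = wd α * (wd β)⁻¹ ∧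
      FreeGroup.norm g = α.length + β.length
  · obtain ⟨α, β, h1, h2⟩ := hd
    refine ⟨α, β, h1, h2, ?_⟩
    have hclosed : IsClosed {ζ : FreeGroup Λ → Bool | ζ g = true → ζ (wd α) = true} := by
      have hst : {ζ : FreeGroup Λ → Bool | ζ g = true → ζ (wd α) = true}
          = {ζ : FreeGroup Λ → Bool | ζ g = false} ∪ {ζ | ζ (wd α) = true} := by
        ext ζ'
        simp only [Set.mem_setOf_eq, Set.mem_union]
        cases hb : ζ' g <;> simp
      rw [hst]
      exact (isClosed_eval _ _).union (isClosed_eval _ _)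
    exact omega_forall (X := X) (fun ζ => ζ g = true → ζ (wd α) = true) hclosed
      (fun x hx hgx => xiB_apex hX hx h1 h2 hgx) ζ hζ hg
  · exfalso
    have key := omega_forall (X := X) (fun ζ => ζ g = false) (isClosed_eval _ _)
      (fun x hx => by
        cases hb : xiB X x g
        · rfl
        · exact absurd (xiB_decomp hb) hd) ζ hζ
    rw [key] at hg
    exact Bool.false_ne_true hg

lemma omega_chain [TopologicalSpace Λ] [DecidableEq Λ] {X : Set (ℕ → Λ)}
    (hX : IsSubshift X) {ζ : FreeGroup Λ → Bool} (hζ : ζ ∈ Omega X) {α α' : List Λ}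
    (hle : α.length ≤ α'.length) (h1 : ζ (wd α) = true) (h2 : ζ (wd α') = true) :
    α <+: α' := by
  by_contra hnp
  have hclosed : IsClosed {ζ : FreeGroup Λ → Bool | ¬(ζ (wd α) = true ∧ ζ (wd α') = true)} := by
    have hst : {ζ : FreeGroup Λ → Bool | ¬(ζ (wd α) = true ∧ ζ (wd α') = true)}
        = ({ζ : FreeGroup Λ → Bool | ζ (wd α) = true} ∩ {ζ | ζ (wd α') = true})ᶜ := by
      ext ζ'; simp [Set.mem_inter_iff, and_comm]
    rw [hst]
    exact ((isOpen_eval _ _).inter (isOpen_eval _ _)).isClosed_compl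
  exact omega_forall (X := X) (fun ζ => ¬(ζ (wd α) = true ∧ ζ (wd α') = true)) hclosed
    (fun x hx ⟨ha, ha'⟩ => hnp (pref_prefix ((xiB_wd_true hX hx α).1 ha)
      ((xiB_wd_true hX hx α').1 ha') hle)) ζ hζ ⟨h1, h2⟩

lemma omega_exists_len [Fintype Λ] [TopologicalSpace Λ] [DecidableEq Λ] {X : Set (ℕ → Λ)}
    (hX : IsSubshift X) {ζ : FreeGroup Λ → Bool} (hζ : ζ ∈ Omega X) (k : ℕ) :
    ∃ α : List Λ, α.length = k ∧ ζ (wd α) = true := by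
  have hfin : {l : List Λ | l.length = k}.Finite := by
    apply Set.Finite.subset (Set.finite_range (fun v : Fin k → Λ => List.ofFn v))
    intro l hl
    simp only [Set.mem_setOf_eq] at hl
    subst hl
    exact ⟨l.get, List.ofFn_get l⟩
  have hclosed : IsClosed {ζ : FreeGroup Λ → Bool |
      ∃ α ∈ {l : List Λ | l.length = k}, ζ (wd α) = true} := by
    have hst : {ζ : FreeGroup Λ → Bool | ∃ α ∈ {l : List Λ | l.length = k}, ζ (wd α) = true}
        = ⋃ α ∈ {l : List Λ | l.length = k}, {ζ : FreeGroup Λ → Bool | ζ (wd α) = true} := by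
      ext ζ'; simp
    rw [hst]
    exact hfin.isClosed_biUnion (fun α _ => isClosed_eval _ _)
  obtain ⟨α, hα, h⟩ := omega_forall (X := X)
    (fun ζ => ∃ α ∈ {l : List Λ | l.length = k}, ζ (wd α) = true) hclosed
    (fun x hx => ⟨List.ofFn fun i : Fin k => x i, by simp,
      (xiB_wd_true hX hx _).2 (pref_ofFn x k)⟩) ζ hζ
  exact ⟨α, hα, h⟩

lemma isOpen_list_forall (L : List (List Λ)) (f : List Λ → FreeGroup Λ) (b : Bool) :
    IsOpen {ζ : FreeGroup Λ → Bool | ∀ β ∈ L, ζ (f β) = b} := by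
  induction L with
  | nil => simp only [List.not_mem_nil, false_implies, implies_true, Set.setOf_true]; exact isOpen_univ
  | cons h t ih =>
    have hst : {ζ : FreeGroup Λ → Bool | ∀ β ∈ h :: t, ζ (f β) = b}
        = {ζ : FreeGroup Λ → Bool | ζ (f h) = b} ∩ {ζ | ∀ β ∈ t, ζ (f β) = b} := by
      ext ζ'; simp [List.forall_mem_cons, Set.mem_inter_iff]
    rw [hst]
    exact (isOpen_eval _ _).inter ih

end Aux13

/-- the sets `V_{α;β₁,…,β_n;γ₁,…,γ_m}` form a basis for the topology
of `Ω_X`. -/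
theorem basis_of_omega {Λ : Type} [Fintype Λ] [Nonempty Λ] [DecidableEq Λ]
    [TopologicalSpace Λ] [DiscreteTopology Λ]
    (X : Set (ℕ → Λ)) (hX : IsSubshift X) :
    TopologicalSpace.IsTopologicalBasis
      {V : Set ↥(Omega X) | ∃ (α : List Λ) (Bs Cs : List (List Λ)),
        V = {η : ↥(Omega X) |
              (η : FreeGroup Λ → Bool) (wd α) = true ∧
              (∀ β ∈ Bs, (η : FreeGroup Λ → Bool) (wd α * (wd β)⁻¹) = true) ∧
              (∀ γ ∈ Cs, (η : FreeGroup Λ → Bool) (wd α * (wd γ)⁻¹) = false)}} := by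
  classical
  apply TopologicalSpace.isTopologicalBasis_of_isOpen_of_nhds
  · rintro V ⟨α, Bs, Cs, rfl⟩
    rw [isOpen_induced_iff]
    refine ⟨{ζ : FreeGroup Λ → Bool | ζ (wd α) = true ∧
      (∀ β ∈ Bs, ζ (wd α * (wd β)⁻¹) = true) ∧
      (∀ γ ∈ Cs, ζ (wd α * (wd γ)⁻¹) = false)}, ?_, rfl⟩
    have h1 := isOpen_eval (wd α) true
    have h2 := isOpen_list_forall Bs (fun β => wd α * (wd β)⁻¹) true
    have h3 := isOpen_list_forall Cs (fun γ => wd α * (wd γ)⁻¹) false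
    exact h1.inter (h2.inter h3)
  · intro a u ha hu
    obtain ⟨w, hw_open, hw_eq⟩ := isOpen_induced_iff.1 hu
    have haw : (a : FreeGroup Λ → Bool) ∈ w := by
      rw [← hw_eq] at ha; exact ha
    obtain ⟨I, U, hIU, hsub⟩ := isOpen_pi_iff.1 hw_open _ haw
    have hηΩ : (a : FreeGroup Λ → Bool) ∈ Omega X := a.2
    set η : FreeGroup Λ → Bool := (a : FreeGroup Λ → Bool) with hηdef
    set N : ℕ := I.sup FreeGroup.norm with hN
    obtain ⟨αs, hαs_len, hαs_true⟩ := omega_exists_len hX hηΩ N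
    have hγ : ∀ g : FreeGroup Λ, ∃ γ : List Λ,
        (∃ α β : List Λ, g = wd α * (wd β)⁻¹ ∧
          FreeGroup.norm g = α.length + β.length ∧ α <+: αs) →
        g = wd αs * (wd γ)⁻¹ := by
      intro g
      by_cases hd : ∃ α β : List Λ, g = wd α * (wd β)⁻¹ ∧
          FreeGroup.norm g = α.length + β.length ∧ α <+: αs
      · obtain ⟨α, β, h1, -, δ, hδ⟩ := hd
        refine ⟨β ++ δ, fun _ => ?_⟩
        rw [← hδ, wd_append, wd_append, h1]
        group
      · exact ⟨[], fun h => absurd h hd⟩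
    choose f hf using hγ
    set Good : FreeGroup Λ → Prop := fun g => ∃ α β : List Λ, g = wd α * (wd β)⁻¹ ∧
      FreeGroup.norm g = α.length + β.length ∧ α <+: αs with hGooddef
    have hGoodTrue : ∀ g ∈ I, ∀ ζ : FreeGroup Λ → Bool, ζ ∈ Omega X →
        ζ (wd αs) = true → ζ g = true → Good g := by
      intro g hgI ζ hζΩ hζαs hζg
      obtain ⟨α, β, h1, h2, hα⟩ := omega_true_decomp hX hζΩ hζg
      have hng : FreeGroup.norm g ≤ N := Finset.le_sup hgI
      have hlen : α.length ≤ αs.length := by omega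
      exact ⟨α, β, h1, h2, omega_chain hX hζΩ hlen hα hζαs⟩
    set Bs : List (List Λ) := (I.toList.filter (fun g => decide (η g = true))).map f
      with hBsdef
    set Cs : List (List Λ) := (I.toList.filter (fun g => decide (η g = false ∧ Good g))).map f
      with hCsdef
    refine ⟨{η' : ↥(Omega X) | (η' : FreeGroup Λ → Bool) (wd αs) = true ∧
        (∀ β ∈ Bs, (η' : FreeGroup Λ → Bool) (wd αs * (wd β)⁻¹) = true) ∧
        (∀ γ ∈ Cs, (η' : FreeGroup Λ → Bool) (wd αs * (wd γ)⁻¹) = false)},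
      ⟨αs, Bs, Cs, rfl⟩, ?_, ?_⟩
    · refine ⟨hαs_true, ?_, ?_⟩
      · intro b hb
        rw [hBsdef] at hb
        simp only [List.mem_map, List.mem_filter, Finset.mem_toList, decide_eq_true_eq] at hb
        obtain ⟨g, ⟨hgI, hgtrue⟩, rfl⟩ := hb
        have hGood : Good g := hGoodTrue g hgI η hηΩ hαs_true hgtrue
        rw [← hf g hGood]
        exact hgtrue
      · intro c hc
        rw [hCsdef] at hc
        simp only [List.mem_map, List.mem_filter, Finset.mem_toList, decide_eq_true_eq] at hc
        obtain ⟨g, ⟨hgI, hgfalse, hGood⟩, rfl⟩ := hc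
        rw [← hf g hGood]
        exact hgfalse
    · rintro ζ' ⟨hζαs, hζBs, hζCs⟩
      have hζΩ : (ζ' : FreeGroup Λ → Bool) ∈ Omega X := ζ'.2
      rw [← hw_eq]
      apply hsub
      rw [Set.mem_pi]
      intro g hgI'
      have hgI : g ∈ I := hgI'
      have hUg := (hIU g hgI).2
      suffices hζη : (ζ' : FreeGroup Λ → Bool) g = η g by
        rw [hζη]; exact hUg
      cases hb : η g with
      | true =>
        have hGood : Good g := hGoodTrue g hgI η hηΩ hαs_true hb
        have hmem : f g ∈ Bs := by
          rw [hBsdef]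
          simp only [List.mem_map, List.mem_filter, Finset.mem_toList, decide_eq_true_eq]
          exact ⟨g, ⟨hgI, hb⟩, rfl⟩
        have := hζBs (f g) hmem
        rw [← hf g hGood] at this
        exact this
      | false =>
        by_cases hGood : Good g
        · have hmem : f g ∈ Cs := by
            rw [hCsdef]
            simp only [List.mem_map, List.mem_filter, Finset.mem_toList, decide_eq_true_eq]
            exact ⟨g, ⟨hgI, hb, hGood⟩, rfl⟩
          have := hζCs (f g) hmem
          rw [← hf g hGood] at this
          exact this
        · cases hzb : (ζ' : FreeGroup Λ → Bool) g with
          | false => rfl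
          | true =>
            exfalso
            exact hGood (hGoodTrue g hgI _ hζΩ hζαs hzb)


end SubshiftPaper
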